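/- Let L be the Laplacian matrix of a strongly connected directed graph on N nodes, and let A^j = diag(a_{1j}, ..., a_{Nj}) be the diagonal matrix formed by the j-th column of the adjacency matrix, where node j has at least one out-neighbor (some a_{ij} = 1 with i ≠ j). Then the matrix L^j = L + A^j is a nonsingular M-matrix: its off-diagonal entries are nonpositive and all its eigenvalues have positive real parts. -/

import Mathlib

open Matrix Finset

theorem laplacian_plus_diag_nonsingular_M {N : ℕ} (a : Fin N → Fin N → ℝ)
    (hval : ∀ i k, a i k = 0 ∨ a i k = 1)
    (hdiag : ∀ i, a i i = 0)
    -- strong connectivity: for all ordered pairs of distinct nodes there is a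
    -- directed path; (j,i) ∈ E (an edge from j to i) iff a i j = 1
    (hconn : ∀ i k : Fin N, i ≠ k → Relation.TransGen (fun u v => a v u = 1) i k)
    (j : Fin N) (hout : ∃ i, i ≠ j ∧ a i j = 1) :
    let L : Matrix (Fin N) (Fin N) ℝ :=
      fun i k => if i = k then ∑ m, a i m else -(a i k)
    let Lj : Matrix (Fin N) (Fin N) ℝ := L + Matrix.diagonal (fun i => a i j)
    (∀ i k, i ≠ k → Lj i k ≤ 0) ∧
      (∀ μ ∈ spectrum ℂ (Lj.map Complex.ofReal), 0 < μ.re) := by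
  intro L Lj
  have ha0 : ∀ i k, 0 ≤ a i k := fun i k => by rcases hval i k with h | h <;> simp [h]
  obtain ⟨i0, hi0j, hi0⟩ := hout
  have hLjoff : ∀ i k, i ≠ k → Lj i k = -(a i k) := by
    intro i k hik
    show L i k + Matrix.diagonal (fun i => a i j) i k = _
    simp [L, Matrix.diagonal_apply, hik]
  have hLjdiag : ∀ p, Lj p p = (∑ k, a p k) + a p j := by
    intro p
    show L p p + Matrix.diagonal (fun i => a i j) p p = _
    simp [L, Matrix.diagonal_apply_eq]
  constructor
  · intro i k hik
    rw [hLjoff i k hik]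
    linarith [ha0 i k]
  · intro μ hμ
    by_contra hre
    push_neg at hre
    set M : Matrix (Fin N) (Fin N) ℂ := Lj.map Complex.ofReal with hM
    have hdet : (algebraMap ℂ (Matrix (Fin N) (Fin N) ℂ) μ - M).det = 0 := by
      have h1 := spectrum.mem_iff.mp hμ
      by_contra hd
      exact h1 ((Matrix.isUnit_iff_isUnit_det _).mpr (isUnit_iff_ne_zero.mpr hd))
    obtain ⟨x, hx0, hxv⟩ := Matrix.exists_mulVec_eq_zero_iff.mpr hdet
    have h2 : (algebraMap ℂ (Matrix (Fin N) (Fin N) ℂ) μ) *ᵥ x = μ • x := by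
      rw [Algebra.algebraMap_eq_smul_one, Matrix.smul_mulVec, Matrix.one_mulVec]
    rw [Matrix.sub_mulVec, h2, sub_eq_zero] at hxv
    have heig : ∀ p, (∑ k, (Lj p k : ℂ) * x k) = μ * x p := by
      intro p
      have h := congrFun hxv p
      simp only [Matrix.mulVec, dotProduct, hM, Matrix.map_apply, Pi.smul_apply,
        smul_eq_mul] at h
      exact h.symm
    -- maximal-modulus index
    obtain ⟨im, -, him⟩ := Finset.exists_max_image (univ : Finset (Fin N))
      (fun k => ‖x k‖) ⟨i0, mem_univ _⟩
    set A : ℝ := ‖x im‖ with hAdef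
    have hA : 0 < A := by
      obtain ⟨k, hk⟩ := Function.ne_iff.mp hx0
      have : 0 < ‖x k‖ := by
        simpa using (norm_pos_iff.mpr hk)
      exact lt_of_lt_of_le this (him k (mem_univ _))
    -- key step at any maximal-modulus node
    have key : ∀ p, ‖x p‖ = A →
        a p j = 0 ∧ ∀ k, a p k = 1 → ‖x k‖ = A := by
      intro p hp
      set d' : ℝ := ∑ k, a p k with hd'
      have hsum : ∑ k, ((a p k : ℂ)) * x k = ((d' + a p j : ℝ) : ℂ) * x p - μ * x p := by
        have hsplit : ∑ k, ((Lj p k : ℂ)) * x k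
            = ((d' + a p j : ℝ) : ℂ) * x p - ∑ k, ((a p k : ℂ)) * x k := by
          rw [← Finset.sum_erase_add _ _ (Finset.mem_univ p)]
          have h1 : ∑ k ∈ univ.erase p, ((Lj p k : ℂ)) * x k
              = - ∑ k ∈ univ.erase p, ((a p k : ℂ)) * x k := by
            rw [← Finset.sum_neg_distrib]
            refine Finset.sum_congr rfl fun k hk => ?_
            have hkp : p ≠ k := (Finset.ne_of_mem_erase hk).symm
            rw [hLjoff p k hkp]
            push_cast
            ring
          have h2 : ∑ k ∈ univ.erase p, ((a p k : ℂ)) * x k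
              = ∑ k, ((a p k : ℂ)) * x k := by
            apply Finset.sum_erase
            simp [hdiag p]
          rw [h1, h2, hLjdiag p, hd']
          push_cast
          ring
        have := heig p
        rw [hsplit] at this
        linear_combination -this
      -- absolute value estimates
      have habs : ‖∑ k, ((a p k : ℂ)) * x k‖
          = ‖((d' + a p j : ℝ) : ℂ) - μ‖ * A := by
        rw [hsum, ← sub_mul, norm_mul, hp]
      have hdle : d' + a p j ≤ ‖((d' + a p j : ℝ) : ℂ) - μ‖ := by
        have h3 : d' + a p j ≤ (((d' + a p j : ℝ) : ℂ) - μ).re := by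
          simp only [Complex.sub_re, Complex.ofReal_re]
          linarith
        exact h3.trans (Complex.re_le_norm _)
      have hub : ‖∑ k, ((a p k : ℂ)) * x k‖
          ≤ ∑ k, a p k * ‖x k‖ := by
        refine (norm_sum_le _ _).trans_eq ?_
        refine Finset.sum_congr rfl fun k _ => ?_
        rw [norm_mul, Complex.norm_of_nonneg (ha0 p k)]
      have hub2 : ∑ k, a p k * ‖x k‖ ≤ d' * A := by
        rw [hd', Finset.sum_mul]
        exact Finset.sum_le_sum fun k _ =>
          mul_le_mul_of_nonneg_left (him k (mem_univ _)) (ha0 p k)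
      have hchain : (d' + a p j) * A ≤ ∑ k, a p k * ‖x k‖ := by
        calc (d' + a p j) * A ≤ ‖((d' + a p j : ℝ) : ℂ) - μ‖ * A :=
              mul_le_mul_of_nonneg_right hdle hA.le
          _ = ‖∑ k, ((a p k : ℂ)) * x k‖ := habs.symm
          _ ≤ _ := hub
      have hpj : a p j = 0 := by
        rcases hval p j with h | h
        · exact h
        · exfalso
          have := hchain.trans hub2
          rw [h] at this
          nlinarith
      refine ⟨hpj, ?_⟩
      -- equality forces all neighbors to be maximal
      rw [hpj, add_zero] at hchain
      have hpt : ∀ k ∈ (univ : Finset (Fin N)),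
          a p k * ‖x k‖ ≤ a p k * A :=
        fun k _ => mul_le_mul_of_nonneg_left (him k (mem_univ _)) (ha0 p k)
      have heqsum : ∑ k, a p k * ‖x k‖ = ∑ k, a p k * A := by
        have h4 : ∑ k, a p k * A = d' * A := by rw [hd', Finset.sum_mul]
        have h5 : ∑ k, a p k * ‖x k‖ ≤ ∑ k, a p k * A :=
          Finset.sum_le_sum hpt
        rw [h4] at h5 ⊢
        linarith
      have heach := (Finset.sum_eq_sum_iff_of_le hpt).mp heqsum
      intro k hk
      have := heach k (mem_univ _)
      rw [hk, one_mul, one_mul] at this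
      exact this
    -- propagate maximality back along paths to i0
    have haux : ∀ c, Relation.TransGen (fun u v => a v u = 1) i0 c →
        ‖x c‖ = A → ‖x i0‖ = A := by
      intro c ht
      induction ht with
      | single h => exact fun hc => (key _ hc).2 i0 h
      | tail h1 h2 ih => exact fun hc => ih ((key _ hc).2 _ h2)
    have hPi0 : ‖x i0‖ = A := by
      rcases eq_or_ne i0 im with h | h
      · rw [h]
      · exact haux im (hconn i0 im h) rfl
    have := (key i0 hPi0).1
    rw [hi0] at this
    exact one_ne_zero this
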